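/- Let S be a finite nonempty set and let s be an infinite sequence over S. Then for every k ≥ 1, s contains a contiguous finite subsequence that is a k-cycle, i.e., a contiguous finite subsequence whose first and last entries coincide, in which at least one element occurs exactly k+1 times, and in which every element occurs at most k+1 times. -/

import Mathlib

set_option autoImplicit false

/-! ## Syntax: arguments, atoms, rules -/

/-- Rule arguments: constants or variables (variables are natural numbers). -/
inductive RArg (C : Type) : Type
  | const : C → RArg C
  | var : ℕ → RArg C

/-- Atoms: a predicate applied to a list of arguments. -/
structure Atom (P τ : Type) : Type where
  pred : P
  args : List τ

/-- An existential rule: finite sets of body and head atoms whose arguments are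
constants and variables. -/
structure Rule (P C : Type) : Type where
  body : Finset (Atom P (RArg C))
  head : Finset (Atom P (RArg C))

instance {P C : Type} : Inhabited (Rule P C) := ⟨⟨∅, ∅⟩⟩

def RArg.toVar? {C : Type} : RArg C → Option ℕ
  | RArg.var v => some v
  | RArg.const _ => none

/-- The list of variables occurring in (the argument list of) an atom. -/
def Atom.varsL {P C : Type} (a : Atom P (RArg C)) : List ℕ :=
  a.args.filterMap RArg.toVar?

/-- The (universal) variables of a rule: the variables of its body. -/
def Rule.bodyVars {P C : Type} (r : Rule P C) : Finset ℕ :=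
  r.body.biUnion fun a => a.varsL.toFinset

def Rule.headVars {P C : Type} (r : Rule P C) : Finset ℕ :=
  r.head.biUnion fun a => a.varsL.toFinset

/-- Frontier variables: body variables occurring in the head. -/
def Rule.frontier {P C : Type} (r : Rule P C) : Finset ℕ :=
  r.bodyVars ∩ r.headVars

/-- Existential variables: head variables not occurring in the body. -/
def Rule.exVars {P C : Type} (r : Rule P C) : Finset ℕ :=
  r.headVars \ r.bodyVars

/-- A canonical listing of the frontier variables of a rule. -/
def Rule.frontierList {P C : Type} (r : Rule P C) : List ℕ :=
  r.frontier.sort (· ≤ ·)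

/-- A rule is simple if no variable occurs more than once in its body. -/
def Rule.IsSimple {P C : Type} (r : Rule P C) : Prop :=
  (∀ a ∈ r.body, a.varsL.Nodup) ∧
    ∀ a ∈ r.body, ∀ b ∈ r.body, a ≠ b → ∀ v ∈ a.varsL, v ∉ b.varsL

/-! ## Ground terms, instances, databases -/

/-- Ground terms over constants `C` and function symbols `F`. -/
inductive GTerm (C F : Type) : Type
  | const : C → GTerm C F
  | func : F → List (GTerm C F) → GTerm C F

/-- The height (nesting depth) of a ground term; constants have height 0. -/
def GTerm.height {C F : Type} : GTerm C F → ℕ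
  | .const _ => 0
  | .func _ ts => 1 + (ts.attach.map (fun t => GTerm.height t.1)).foldr max 0
decreasing_by
  simp_wf
  have := List.sizeOf_lt_of_mem t.2
  omega

/-- Ground constants: the constants `C` occurring in rules together with the
fresh indexed constants `⟨v, i⟩` (and the fresh constant `∗ = inr (0,0)`). -/
abbrev GConst (C : Type) : Type := C ⊕ (ℕ × ℕ)

/-- Skolem function symbols: one fresh symbol `f_{r,z}` for each rule `r` and
existential variable `z`. -/
abbrev SkFun (P C : Type) : Type := Rule P C × ℕ

/-- Ground terms built from constants and skolem function symbols. -/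
abbrev GT (P C : Type) : Type := GTerm (GConst C) (SkFun P C)

abbrev GAtom (P C : Type) : Type := Atom P (GT P C)

/-- An instance is a set of atoms over ground terms. -/
abbrev Inst (P C : Type) : Type := Set (GAtom P C)

/-- An assignment of ground terms to variables. -/
abbrev Assign (P C : Type) : Type := ℕ → GT P C

/-- A database: a finite instance all of whose terms are constants. -/
def IsDatabase {P C : Type} (I : Inst P C) : Prop :=
  I.Finite ∧ ∀ a ∈ I, ∀ t ∈ a.args, ∃ c : GConst C, t = GTerm.const c

/-! ## Applying assignments and substitutions -/

def RArg.interp {P C : Type} (h : Assign P C) : RArg C → GT P C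
  | RArg.const c => GTerm.const (Sum.inl c)
  | RArg.var v => h v

def Atom.interp {P C : Type} (h : Assign P C) (a : Atom P (RArg C)) : GAtom P C :=
  ⟨a.pred, a.args.map (RArg.interp h)⟩

/-- The image `h(body(r))` of the body of a rule under an assignment. -/
def Rule.bodyI {P C : Type} (r : Rule P C) (h : Assign P C) : Inst P C :=
  (Atom.interp h) '' ↑r.body

/-- The image `h(head(r))` of the head of a rule under an assignment. -/
def Rule.headI {P C : Type} (r : Rule P C) (h : Assign P C) : Inst P C :=
  (Atom.interp h) '' ↑r.head

/-- The skolem extension of an assignment: each existential variable `z` of `r`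
is sent to the skolem term `f_{r,z}(x)`, where `x` lists the frontier variables. -/
def Rule.skolemExt {P C : Type} (r : Rule P C) (h : Assign P C) : Assign P C :=
  fun v => if v ∈ r.exVars then GTerm.func (r, v) (r.frontierList.map h) else h v

/-- `h(sk(head(r)))`: the atoms added when the trigger `(r,h)` is applied. -/
def Rule.skApply {P C : Type} (r : Rule P C) (h : Assign P C) : Inst P C :=
  r.headI (r.skolemExt h)

/-- A ground substitution: fixes all constants (skolem terms are nulls and may
be mapped anywhere). -/
def IsGSubst {P C : Type} (f : GT P C → GT P C) : Prop :=
  ∀ c : GConst C, f (GTerm.const c) = GTerm.const c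

def Atom.mapArgs {P C : Type} (f : GT P C → GT P C) (a : GAtom P C) : GAtom P C :=
  ⟨a.pred, a.args.map f⟩

/-! ## Triggers, the restricted chase, chained sequences, activeness -/

/-- `(r,h)` is a trigger on `I`: `h` is a homomorphism from `body(r)` to `I`. -/
def Trigger {P C : Type} (r : Rule P C) (h : Assign P C) (I : Inst P C) : Prop :=
  r.bodyI h ⊆ I

/-- An active trigger: no extension of `h` on the existential variables
satisfies the head in `I`. -/
def ActiveTrigger {P C : Type} (r : Rule P C) (h : Assign P C) (I : Inst P C) : Prop :=
  Trigger r h I ∧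
    ∀ h' : Assign P C, (∀ v ∈ r.bodyVars, h' v = h v) → ¬ (r.headI h' ⊆ I)

/-- `π` leads to a restricted chase sequence `Is 0, …, Is π.length` from `Is 0 = I0`,
generated by the active triggers `(π.get i, hs i)`. -/
def RCSeq {P C : Type} (π : List (Rule P C)) (I0 : Inst P C)
    (Is : ℕ → Inst P C) (hs : ℕ → Assign P C) : Prop :=
  Is 0 = I0 ∧ ∀ i < π.length,
    ActiveTrigger (π.getD i default) (hs i) (Is i) ∧
      Is (i + 1) = Is i ∪ (π.getD i default).skApply (hs i)

/-- `π` leads to a skolem chase sequence (triggers need not be active). -/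
def SkSeq {P C : Type} (π : List (Rule P C)) (I0 : Inst P C)
    (Is : ℕ → Inst P C) (hs : ℕ → Assign P C) : Prop :=
  Is 0 = I0 ∧ ∀ i < π.length,
    Trigger (π.getD i default) (hs i) (Is i) ∧
      Is (i + 1) = Is i ∪ (π.getD i default).skApply (hs i)

/-- Rule `r'` depends on rule `r` w.r.t. instance `I`. -/
def RuleDependsOn {P C : Type} (r' r : Rule P C) (I : Inst P C) : Prop :=
  ∃ h g : Assign P C,
    r.bodyI h ⊆ I ∧ r'.bodyI g ⊆ I ∪ r.skApply h ∧ ¬ (r'.bodyI g ⊆ I)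

/-- The chained property of a restricted chase sequence for `π`: some projection of
`π` preserving the end points is linked by the depends-on relation. -/
def Chained {P C : Type} (π : List (Rule P C)) (I0 : Inst P C)
    (Is : ℕ → Inst P C) (hs : ℕ → Assign P C) : Prop :=
  ∃ (m : ℕ) (j : ℕ → ℕ),
    1 ≤ m ∧
    (∀ i, i + 1 < m → j i < j (i + 1)) ∧
    j 0 = 0 ∧
    j (m - 1) + 1 = π.length ∧
    (∀ i < m, j i < π.length) ∧
    ∀ i, i + 1 < m →
      RuleDependsOn (π.getD (j (i + 1)) default) (π.getD (j i) default)
        (if i = 0 then I0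
         else Is (j i + 1) \ (π.getD (j i) default).skApply (hs (j i)))

/-- A path `π` is active w.r.t. `I0` if there is a chained restricted chase
sequence for `π` starting from `I0`. -/
def ActivePath {P C : Type} (π : List (Rule P C)) (I0 : Inst P C) : Prop :=
  ∃ (Is : ℕ → Inst P C) (hs : ℕ → Assign P C), RCSeq π I0 Is hs ∧ Chained π I0 Is hs

/-! ## Restricted critical databases and renaming -/

/-- The assignment `e_i` sending variable `v` to the fresh indexed constant `⟨v,i⟩`. -/
def idxAssign {P C : Type} (i : ℕ) : Assign P C :=
  fun v => GTerm.const (Sum.inr (v, i))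

/-- The restricted critical database `I^π` of a path `π`. -/
def criticalDB {P C : Type} (π : List (Rule P C)) : Inst P C :=
  ⋃ i ∈ Finset.range π.length, (π.getD i default).bodyI (idxAssign i)

/-- A renaming function: each indexed constant is mapped to itself or to an
indexed constant with strictly smaller index. -/
def IsRenaming (rn : ℕ × ℕ → ℕ × ℕ) : Prop :=
  ∀ p : ℕ × ℕ, rn p = p ∨ (rn p).2 < p.2

def renameGT {P C : Type} (rn : ℕ × ℕ → ℕ × ℕ) : GT P C → GT P C
  | GTerm.const (Sum.inr p) => GTerm.const (Sum.inr (rn p))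
  | t => t

def renameInst {P C : Type} (rn : ℕ × ℕ → ℕ × ℕ) (I : Inst P C) : Inst P C :=
  (fun a => Atom.mapArgs (renameGT rn) a) '' I

/-! ## Cycles, cycle functions, k-safe -/

/-- The number of occurrences of `x` in the list `σ`. -/
noncomputable def occCount {α : Type} (σ : List α) (x : α) : ℕ :=
  {i : Fin σ.length | σ.get i = x}.ncard

/-- A `k`-cycle: a nonempty sequence whose first and last entries coincide, in
which some element occurs exactly `k+1` times and every element occurs at most
`k+1` times. -/
def IsKCycle {α : Type} (k : ℕ) (σ : List α) : Prop :=
  σ ≠ [] ∧ σ.head? = σ.getLast? ∧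
    (∃ x ∈ σ, occCount σ x = k + 1) ∧ ∀ x ∈ σ, occCount σ x ≤ k + 1

/-- `R` belongs to `k`-safe(Φ): every `k`-cycle based on `R` mapped to `F`
(i.e. not satisfying `Φ`) is safe, i.e. active w.r.t. no database. -/
def kSafe {P C : Type} (R : Set (Rule P C)) (k : ℕ) (Φ : List (Rule P C) → Prop) : Prop :=
  ∀ σ : List (Rule P C), (∀ r ∈ σ, r ∈ R) → IsKCycle k σ → ¬ Φ σ →
    ∀ I0 : Inst P C, IsDatabase I0 → ¬ ActivePath σ I0

/-- The cycle function derived from a class `Δ` of rule sets: a cycle is mapped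
to `T` iff its set of distinct rules belongs to `Δ`. -/
def PhiDelta {P C : Type} (Δ : Set (Set (Rule P C))) : List (Rule P C) → Prop :=
  fun σ => {r | r ∈ σ} ∈ Δ

/-! ## The skolem chase and all-instance termination -/

def skStep {P C : Type} (R : Set (Rule P C)) (I : Inst P C) : Inst P C :=
  I ∪ {a | ∃ r ∈ R, ∃ h : Assign P C, Trigger r h I ∧ a ∈ r.skApply h}

def skIter {P C : Type} (R : Set (Rule P C)) (I : Inst P C) : ℕ → Inst P C
  | 0 => I
  | n + 1 => skStep R (skIter R I n)

/-- The skolem chase `chase_sk(I,R)`. -/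
def skChase {P C : Type} (R : Set (Rule P C)) (I : Inst P C) : Inst P C :=
  ⋃ n, skIter R I n

/-- `R` is all-instance terminating under the skolem chase. -/
def SkTerminating {P C : Type} (R : Set (Rule P C)) : Prop :=
  ∀ I : Inst P C, IsDatabase I → (skChase R I).Finite

/-- An infinite (fair) restricted chase sequence of `R` from `I0`. -/
def InfiniteRCS {P C : Type} (R : Set (Rule P C)) (I0 : Inst P C)
    (Is : ℕ → Inst P C) (rs : ℕ → Rule P C) (hs : ℕ → Assign P C) : Prop :=
  Is 0 = I0 ∧
  (∀ i, rs i ∈ R ∧ ActiveTrigger (rs i) (hs i) (Is i) ∧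
      Is (i + 1) = Is i ∪ (rs i).skApply (hs i)) ∧
  (∀ i j, i ≠ j → ¬ (rs i = rs j ∧ hs i = hs j)) ∧
  (∀ i, ∀ r ∈ R, ∀ h : Assign P C, ActiveTrigger r h (Is i) →
      ∃ j, i ≤ j ∧ ((rs j = r ∧ hs j = h) ∨ ¬ ActiveTrigger r h (Is j)))

/-- `R` is all-instance terminating under the restricted chase. -/
def ResTerminating {P C : Type} (R : Set (Rule P C)) : Prop :=
  ¬ ∃ (I0 : Inst P C) (Is : ℕ → Inst P C) (rs : ℕ → Rule P C) (hs : ℕ → Assign P C),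
      IsDatabase I0 ∧ InfiniteRCS R I0 Is rs hs

/-! ## Heights, sizes, bounded rule sets, MembCheck -/

/-- Every term occurring in the instance `I` has height at most `n`. -/
def instHeightLe {P C : Type} (I : Inst P C) (n : ℕ) : Prop :=
  ∀ a ∈ I, ∀ t ∈ a.args, GTerm.height t ≤ n

/-- The size of a rule: the sum of the sizes of its atoms. -/
def Rule.size {P C : Type} (r : Rule P C) : ℕ :=
  (∑ a ∈ r.body, a.args.length) + ∑ a ∈ r.head, a.args.length

/-- `‖R‖`: the number of symbols occurring in the rule set `R`. -/
def ruleSetSize {P C : Type} (R : Finset (Rule P C)) : ℕ :=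
  ∑ r ∈ R, r.size

/-- `R` is `δ`-bounded under the restricted chase (with `bound = δ(‖R‖)`):
every restricted chase sequence of `R` and any database has height at most `bound`. -/
def DeltaBoundedRes {P C : Type} (R : Set (Rule P C)) (bound : ℕ) : Prop :=
  ∀ I0 : Inst P C, IsDatabase I0 → ∀ π : List (Rule P C), (∀ r ∈ π, r ∈ R) →
    ∀ (Is : ℕ → Inst P C) (hs : ℕ → Assign P C), RCSeq π I0 Is hs →
      ∀ i ≤ π.length, instHeightLe (Is i) bound

/-- The skolem critical database `I^R`: all atoms `P(t)` where `P` occurs in `R`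
(with an arity it has in `R`) and `t` ranges over tuples of constants occurring in
`R` together with the fresh constant `∗ = inr (0,0)`. -/
def skCritDB {P C : Type} (R : Set (Rule P C)) : Inst P C :=
  {a | (∃ r ∈ R, ∃ b : Atom P (RArg C), (b ∈ r.body ∨ b ∈ r.head) ∧
          b.pred = a.pred ∧ b.args.length = a.args.length) ∧
       ∀ t ∈ a.args,
         (∃ c : C, (∃ r ∈ R, ∃ b : Atom P (RArg C), (b ∈ r.body ∨ b ∈ r.head) ∧
             RArg.const c ∈ b.args) ∧ t = GTerm.const (Sum.inl c)) ∨
         t = GTerm.const (Sum.inr (0, 0))}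

/-- The condition under which the procedure `MembCheck(R,δ)` returns `T`. -/
def MembCheckT {P C : Type} (R : Finset (Rule P C)) (δ : ℕ → ℕ) : Prop :=
  instHeightLe (skChase (↑R : Set (Rule P C)) (skCritDB (↑R : Set (Rule P C))))
      (δ (ruleSetSize R)) ∨
  (∀ π : List (Rule P C), π ≠ [] → (∀ r ∈ π, r ∈ R) →
    (∃ (Is : ℕ → Inst P C) (hs : ℕ → Assign P C),
        SkSeq π (skCritDB (↑R : Set (Rule P C))) Is hs ∧
        ∃ i ≤ π.length, ∃ a ∈ Is i, ∃ t ∈ a.args,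
          GTerm.height t = δ (ruleSetSize R) + 1) →
    ∀ rn : ℕ × ℕ → ℕ × ℕ, IsRenaming rn →
      ¬ ActivePath π (renameInst rn (criticalDB π)))

set_option maxRecDepth 4000 in
theorem occCount_eq_count {α : Type} [DecidableEq α] (σ : List α) (x : α) : occCount σ x = σ.count x := by
  classical
  rw [occCount, show {i : Fin σ.length | σ.get i = x} = ↑(Finset.univ.filter fun i : Fin σ.length => σ.get i = x) by ext i; simp, Set.ncard_coe_finset]
  induction σ with
  | nil => simp
  | cons a l ih =>
    rw [List.count_cons, ← ih, Fin.univ_succ, Finset.filter_cons, apply_ite Finset.card,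
      Finset.card_cons, Finset.filter_map, Finset.card_map]
    simp only [Function.comp_def, Function.Embedding.coeFn_mk, List.get_cons_succ]
    by_cases hax : a = x <;> simp [hax, Nat.add_comm]

/-- Every infinite sequence over a finite nonempty set contains, for
every `k ≥ 1`, a contiguous finite subsequence that is a `k`-cycle. -/
theorem exists_kCycle_segment_of_infinite_sequence
    {S : Type} [Finite S] [Nonempty S] (s : ℕ → S) (k : ℕ) (hk : 1 ≤ k) :
    ∃ n m : ℕ, IsKCycle k ((List.range m).map fun i => s (n + i)) := by
  classical
  letI : Fintype S := Fintype.ofFinite S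
  -- existence of a prefix where some element reaches k+1 occurrences
  have hP : ∃ m, ∃ x : S, k + 1 ≤ ((List.range m).map s).count x := by
    refine ⟨Fintype.card S * k + 1, ?_⟩
    by_contra hno
    push_neg at hno
    set L := (List.range (Fintype.card S * k + 1)).map s with hL
    have hlen : L.length = Fintype.card S * k + 1 := by simp [hL]
    have hsum : ∑ x ∈ L.toFinset, L.count x = L.length := List.sum_toFinset_count_eq_length L
    have hle : L.length ≤ Fintype.card S * k := by
      rw [← hsum]
      calc ∑ x ∈ L.toFinset, L.count x ≤ ∑ _x ∈ L.toFinset, k :=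
            Finset.sum_le_sum fun x _ => Nat.lt_succ_iff.mp (hno x)
        _ = L.toFinset.card * k := by rw [Finset.sum_const, smul_eq_mul]
        _ ≤ Fintype.card S * k := Nat.mul_le_mul_right k (Finset.card_le_univ _)
    omega
  obtain ⟨m, ⟨x, hx⟩, hmmin⟩ : ∃ m, (∃ x : S, k + 1 ≤ ((List.range m).map s).count x) ∧
      ∀ j < m, ¬ ∃ x : S, k + 1 ≤ ((List.range j).map s).count x :=
    ⟨Nat.find hP, Nat.find_spec hP, fun j hj => Nat.find_min hP hj⟩
  have hm0 : m ≠ 0 := by rintro rfl; simp at hx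
  obtain ⟨m', rfl⟩ : ∃ m', m = m' + 1 := ⟨m - 1, by omega⟩
  have hmin : ∀ y : S, ((List.range m').map s).count y ≤ k := by
    intro y
    have h := hmmin m' (by omega)
    push_neg at h
    have := h y
    omega
  have hsplit : (List.range (m' + 1)).map s = (List.range m').map s ++ [s m'] := by
    rw [List.range_succ]; simp
  -- x = s m' and the count is exactly k+1
  have hxlast : x = s m' := by
    by_contra hne
    rw [hsplit, List.count_append] at hx
    have h1 : ([s m'] : List S).count x = 0 := by
      simp [List.count_singleton]
      exact fun h => hne h.symm
    have := hmin x
    omega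
  have hxexact : ((List.range (m' + 1)).map s).count x = k + 1 := by
    rw [hsplit, List.count_append]
    rw [hsplit, List.count_append] at hx
    have h1 : ([s m'] : List S).count x ≤ 1 := List.count_le_length ..
    have := hmin x
    omega
  have hyle : ∀ y : S, ((List.range (m' + 1)).map s).count y ≤ k + 1 := by
    intro y
    rw [hsplit, List.count_append]
    have h1 : ([s m'] : List S).count y ≤ 1 := List.count_le_length ..
    have := hmin y
    omega
  -- minimal n with s n = x
  have hQ : ∃ n, s n = x := by
    have hmem : x ∈ (List.range (m' + 1)).map s := by
      have : 0 < ((List.range (m' + 1)).map s).count x := by omega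
      exact List.count_pos_iff.mp this
    obtain ⟨i, _, hi⟩ := List.mem_map.mp hmem
    exact ⟨i, hi⟩
  obtain ⟨n, hn, hnmin⟩ : ∃ n, s n = x ∧ ∀ j < n, s j ≠ x :=
    ⟨Nat.find hQ, Nat.find_spec hQ, fun j hj => Nat.find_min hQ hj⟩
  have hnm : n < m' + 1 := by
    by_contra h
    push_neg at h
    exact hnmin m' (by omega) hxlast.symm
  -- the segment
  refine ⟨n, m' + 1 - n, ?_⟩
  set L := (List.range (m' + 1 - n)).map fun i => s (n + i) with hLdef
  have hsplit2 : (List.range (m' + 1)).map s = (List.range n).map s ++ L := by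
    have h1 : m' + 1 = n + (m' + 1 - n) := by omega
    rw [h1, List.range_add, List.map_append, List.map_map]
    congr 1
  have hcount0 : ((List.range n).map s).count x = 0 := by
    rw [List.count_eq_zero]
    intro hmem
    obtain ⟨i, hi, hix⟩ := List.mem_map.mp hmem
    exact hnmin i (List.mem_range.mp hi) hix
  have hLx : L.count x = k + 1 := by
    have := hxexact
    rw [hsplit2, List.count_append, hcount0] at this
    omega
  have hLy : ∀ y : S, L.count y ≤ k + 1 := by
    intro y
    have := hyle y
    rw [hsplit2, List.count_append] at this
    omega
  have hlenL : L.length = m' + 1 - n := by simp [hLdef]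
  have hLne : L ≠ [] := by
    intro h
    rw [h] at hlenL
    simp at hlenL
    omega
  refine ⟨hLne, ?_, ⟨x, ?_, ?_⟩, ?_⟩
  · -- head = last
    rw [List.head?_eq_getElem?, List.getLast?_eq_getElem?]
    have h0 : L[0]? = some (s (n + 0)) := by
      rw [hLdef, List.getElem?_map, List.getElem?_range (by omega)]
      rfl
    have h1 : L[L.length - 1]? = some (s (n + (m' + 1 - n - 1))) := by
      rw [hlenL, hLdef, List.getElem?_map, List.getElem?_range (by omega)]
      rfl
    rw [h0, h1]
    have : n + (m' + 1 - n - 1) = m' := by omega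
    rw [this, Nat.add_zero, hn, ← hxlast]
  · exact List.count_pos_iff.mp (by omega : 0 < L.count x)
  · rw [occCount_eq_count]; exact hLx
  · intro y _; rw [occCount_eq_count]; exact hLy y
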